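/- arXiv:1508.04949 — 3 statements merged into one kernel-verified Lean document; each statement's English description precedes it below -/
import Mathlib

section
/- For every natural number n, ∑_{k=0}^n 2^k · L_k = 2^{n+1} · F_{n+1} (Sury's identity). -/
def lucas : ℕ → ℕ
  | 0 => 2
  | 1 => 1
  | n + 2 => lucas (n + 1) + lucas n

lemma lucas_fib : ∀ n, lucas n + Nat.fib n = 2 * Nat.fib (n + 1)
  | 0 => rfl
  | 1 => rfl
  | n + 2 => by
    have h1 := lucas_fib (n + 1)
    have h2 := lucas_fib n
    simp [lucas, Nat.fib_add_two] at h1 h2 ⊢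
    omega

theorem sury (n : ℕ) :
    ∑ k ∈ Finset.range (n + 1), 2 ^ k * lucas k = 2 ^ (n + 1) * Nat.fib (n + 1) := by
  induction n with
  | zero => rfl
  | succ n ih =>
    rw [Finset.sum_range_succ, ih]
    have h := lucas_fib (n + 1)
    rw [← mul_add, add_comm (Nat.fib (n + 1)), h]
    ring
end

section
/- For every natural number m ≥ 2 and every natural number n, (m^2 + m - 1) · ∑_{k=0}^n m^k · F_k = m^{n+1} · (F_{n+1} + m·F_n) - m (as integers). -/
theorem sum_pow_mul_fib (m n : ℕ) (hm : 2 ≤ m) :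
    ((m : ℤ) ^ 2 + m - 1) * ∑ k ∈ Finset.range (n + 1), (m : ℤ) ^ k * Nat.fib k =
      (m : ℤ) ^ (n + 1) * (Nat.fib (n + 1) + m * Nat.fib n) - m := by
  induction n with
  | zero => simp
  | succ n ih =>
    rw [Finset.sum_range_succ, mul_add, ih, Nat.fib_add_two]
    push_cast
    ring
end

section
/- For every natural number m ≥ 2 and every natural number n, (m^2 + m - 1) · ∑_{k=0}^n m^k · L_k = m^{n+1} · ((2m+1)·F_{n+1} - (m-2)·F_n) + (m-2) (as integers). -/
lemma lucas_eq_fib (n : ℕ) : (lucas n : ℤ) = 2 * Nat.fib (n + 1) - Nat.fib n := by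
  induction n using Nat.twoStepInduction with
  | zero => simp [lucas]
  | one => simp [lucas]
  | more k h1 h2 =>
    rw [lucas]; simp only [Nat.fib_add_two]
    have h3 : (Nat.fib (k + 1 + 1) : ℤ) = Nat.fib k + Nat.fib (k + 1) := by
      rw [show k + 1 + 1 = k + 2 from rfl, Nat.fib_add_two]; push_cast; ring
    push_cast
    linarith

theorem sum_pow_mul_lucas (m n : ℕ) (hm : 2 ≤ m) :
    ((m : ℤ) ^ 2 + m - 1) * ∑ k ∈ Finset.range (n + 1), (m : ℤ) ^ k * lucas k =
      (m : ℤ) ^ (n + 1) * ((2 * m + 1) * Nat.fib (n + 1) - (m - 2) * Nat.fib n) + (m - 2) := by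
  induction n with
  | zero => simp [lucas]; ring
  | succ n ih =>
    rw [Finset.sum_range_succ, mul_add, ih, lucas_eq_fib,
      show n + 1 + 1 = n + 2 from rfl, Nat.fib_add_two]
    push_cast
    ring
end
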